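/- Let T act on S¹ ∧ X with trivial action on S¹. Then for each (t,x), the T(t,x)-fixed subspace of L²(S¹ ∧ X) equals S¹ ∧ (L²X)^{T(t,x)}, viewed inside L²(S¹ ∧ X) as the loops γ = (γ₁, γ₂) with γ₁ constant and γ₂ ∈ (L²X)^{T(t,x)}, modulo the wedge identification. -/
import Mathlib


noncomputable section

/-- The circle `𝕋 = ℝ/ℤ`. -/
abbrev 𝕊 : Type := UnitAddCircle

/-- The compact torus of rank `n`. -/
abbrev Tor (n : ℕ) : Type := Fin n → 𝕊

/-- The exponential map `𝔱 = ℝⁿ → T = (ℝ/ℤ)ⁿ`. -/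
def expT {n : ℕ} (x : Fin n → ℝ) : Tor n := fun i => (x i : 𝕊)

/-- The two-parameter homomorphism `(r₁,r₂) ↦ (exp(r₁), exp(r₂), exp_T(x₁r₁ + x₂r₂))`
into `𝕋² × T`. -/
def onePar {n : ℕ} (x₁ x₂ : Fin n → ℝ) (r₁ r₂ : ℝ) : (𝕊 × 𝕊) × Tor n :=
  (((r₁ : 𝕊), (r₂ : 𝕊)), expT (r₁ • x₁ + r₂ • x₂))

/-- The closed subgroup `T(t,x) ⊆ 𝕋² × T`: the closure of
`{(exp(r₁), exp(r₂), exp_T(x₁r₁ + x₂r₂)) | r₁, r₂ ∈ ℝ}`. -/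
def Ttx {n : ℕ} (x₁ x₂ : Fin n → ℝ) : AddSubgroup ((𝕊 × 𝕊) × Tor n) :=
  (AddSubgroup.closure (Set.range fun p : ℝ × ℝ => onePar x₁ x₂ p.1 p.2)).topologicalClosure

/-- The closed subgroup `T(a) = ⟨exp_T(x₁), exp_T(x₂)⟩ ⊆ T`. -/
def Ta {n : ℕ} (x₁ x₂ : Fin n → ℝ) : AddSubgroup (Tor n) :=
  (AddSubgroup.closure ({expT x₁, expT x₂} : Set (Tor n))).topologicalClosure

/-- The relation on `S¹ × X` collapsing the wedge `S¹ ∨ X = S¹ × {x₀} ∪ {0} × X` to a point. -/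
def smashRel (X : Type) (x₀ : X) (p q : 𝕊 × X) : Prop :=
  p = q ∨ ((p.1 = 0 ∨ p.2 = x₀) ∧ (q.1 = 0 ∨ q.2 = x₀))

/-- The smash product `S¹ ∧ X`. -/
def Smash (X : Type) (x₀ : X) : Type := Quot (smashRel X x₀)

/-- The quotient map `S¹ × X → S¹ ∧ X`, `(w, z) ↦ w ∧ z`. -/
def smashMk (X : Type) (x₀ : X) (p : 𝕊 × X) : Smash X x₀ := Quot.mk _ p

/-- The action of `u ∈ T` on `S¹ ∧ X` (trivial on `S¹`), assuming the basepoint is fixed. -/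
def smashVAdd {n : ℕ} (X : Type) [AddAction (Tor n) X] (x₀ : X)
    (hx₀ : ∀ u : Tor n, u +ᵥ x₀ = x₀) (u : Tor n) : Smash X x₀ → Smash X x₀ :=
  Quot.map (fun p => (p.1, u +ᵥ p.2)) (by
    rintro p q (rfl | ⟨hp, hq⟩)
    · exact Or.inl rfl
    · refine Or.inr ⟨?_, ?_⟩
      · rcases hp with h | h
        · exact Or.inl h
        · exact Or.inr (by show u +ᵥ p.2 = x₀; rw [h, hx₀])
      · rcases hq with h | h
        · exact Or.inl h
        · exact Or.inr (by show u +ᵥ q.2 = x₀; rw [h, hx₀]))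

lemma smashRel_equiv (X : Type) (x₀ : X) : Equivalence (smashRel X x₀) := by
  constructor
  · intro p; exact Or.inl rfl
  · rintro p q (rfl | ⟨hp, hq⟩)
    · exact Or.inl rfl
    · exact Or.inr ⟨hq, hp⟩
  · rintro p q r (rfl | ⟨hp, hq⟩) (rfl | ⟨hq', hr⟩)
    · exact Or.inl rfl
    · exact Or.inr ⟨hq', hr⟩
    · exact Or.inr ⟨hp, hq⟩
    · exact Or.inr ⟨hp, hr⟩

lemma smash_mk_eq {X : Type} {x₀ : X} {p q : 𝕊 × X}
    (h : smashMk X x₀ p = smashMk X x₀ q) : smashRel X x₀ p q :=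
  ((smashRel_equiv X x₀).eqvGen_iff).mp (Quot.eq.mp h)

lemma onePar_mem_Ttx {n : ℕ} (x₁ x₂ : Fin n → ℝ) (r₁ r₂ : ℝ) :
    onePar x₁ x₂ r₁ r₂ ∈ Ttx x₁ x₂ :=
  AddSubgroup.le_topologicalClosure _
    (AddSubgroup.subset_closure ⟨(r₁, r₂), rfl⟩)

lemma exists_mem_Ttx_fst {n : ℕ} (x₁ x₂ : Fin n → ℝ) (s : 𝕊 × 𝕊) :
    ∃ g ∈ Ttx x₁ x₂, g.1 = s := by
  obtain ⟨r₁, hr₁⟩ := QuotientAddGroup.mk_surjective s.1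
  obtain ⟨r₂, hr₂⟩ := QuotientAddGroup.mk_surjective s.2
  exact ⟨onePar x₁ x₂ r₁ r₂, onePar_mem_Ttx x₁ x₂ r₁ r₂,
    Prod.ext hr₁ hr₂⟩

/-- Let `T` act on `S¹ ∧ X` with trivial action on `S¹`.  Then the
`T(t,x)`-fixed subspace of `L²(S¹ ∧ X)` equals `S¹ ∧ (L²X)^{T(t,x)}`, viewed inside
`L²(S¹ ∧ X)` via `(w, γ) ↦ (s ↦ w ∧ γ(s))`. -/
theorem stmt_14 {n : ℕ} (X : Type) [TopologicalSpace X]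
    [AddAction (Tor n) X] [ContinuousVAdd (Tor n) X]
    (x₀ : X) (hx₀ : ∀ u : Tor n, u +ᵥ x₀ = x₀) (x₁ x₂ : Fin n → ℝ) :
    {γ : 𝕊 × 𝕊 → Smash X x₀ |
        ∀ g ∈ Ttx x₁ x₂, ∀ s, smashVAdd X x₀ hx₀ g.2 (γ (s - g.1)) = γ s}
      = Set.range (fun p : 𝕊 × {δ : 𝕊 × 𝕊 → X //
            ∀ g ∈ Ttx x₁ x₂, ∀ s, g.2 +ᵥ δ (s - g.1) = δ s} =>
          fun s => smashMk X x₀ (p.1, p.2.1 s)) := by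
  ext γ
  simp only [Set.mem_setOf_eq, Set.mem_range]
  constructor
  · intro hγ
    choose gg hgg hgg1 using exists_mem_Ttx_fst x₁ x₂
    obtain ⟨p₀, hp₀⟩ := Quot.exists_rep (γ 0)
    have key : ∀ g ∈ Ttx x₁ x₂, γ g.1 = smashMk X x₀ (p₀.1, g.2 +ᵥ p₀.2) := by
      intro g hg
      have := hγ g hg g.1
      rw [sub_self] at this
      rw [← this, ← hp₀]
      rfl
    by_cases hbp : p₀.1 = 0 ∨ p₀.2 = x₀
    · refine ⟨(0, ⟨fun _ => x₀, fun g _ s => hx₀ g.2⟩), ?_⟩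
      funext s
      have h1 := key (gg s) (hgg s)
      rw [hgg1 s] at h1
      rw [h1]
      have hrel : smashRel X x₀ ((0 : 𝕊), x₀) (p₀.1, (gg s).2 +ᵥ p₀.2) := by
        refine Or.inr ⟨Or.inl rfl, ?_⟩
        rcases hbp with h | h
        · exact Or.inl h
        · exact Or.inr (by rw [h, hx₀])
      exact Quot.sound hrel
    · push_neg at hbp
      obtain ⟨h1, h2⟩ := hbp
      -- the second coordinate never hits the basepoint
      have claimA : ∀ g ∈ Ttx x₁ x₂, g.2 +ᵥ p₀.2 ≠ x₀ := by
        intro g hg hcon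
        have hg1 := key g hg
        rw [hcon] at hg1
        have hneg := hγ (-g) (neg_mem hg) 0
        have : (0 : 𝕊 × 𝕊) - (-g).1 = g.1 := by simp
        rw [this, hg1] at hneg
        have : smashVAdd X x₀ hx₀ (-g).2 (smashMk X x₀ (p₀.1, x₀))
            = smashMk X x₀ (p₀.1, (-g).2 +ᵥ x₀) := rfl
        rw [this, hx₀] at hneg
        rw [← hp₀] at hneg
        rcases smash_mk_eq hneg with heq | ⟨_, hb⟩
        · exact h2 (congrArg Prod.snd heq).symm
        · rcases hb with hb | hb
          · exact h1 hb
          · exact h2 hb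
      -- values of the second coordinate only depend on the first component
      have claimB : ∀ g ∈ Ttx x₁ x₂, ∀ g' ∈ Ttx x₁ x₂, g.1 = g'.1 →
          g.2 +ᵥ p₀.2 = g'.2 +ᵥ p₀.2 := by
        intro g hg g' hg' hfst
        have h := key g hg
        have h' := key g' hg'
        rw [hfst, h'] at h
        rcases smash_mk_eq h.symm with heq | ⟨hb, _⟩
        · exact congrArg Prod.snd heq
        · rcases hb with hb | hb
          · exact absurd hb h1
          · exact absurd hb (claimA g hg)
      set δ : 𝕊 × 𝕊 → X := fun s => (gg s).2 +ᵥ p₀.2 with hδdef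
      have hγeq : ∀ s, γ s = smashMk X x₀ (p₀.1, δ s) := by
        intro s
        have := key (gg s) (hgg s)
        rwa [hgg1 s] at this
      refine ⟨(p₀.1, ⟨δ, ?_⟩), (funext fun s => (hγeq s).symm)⟩
      intro g hg s
      have hmem : g + gg (s - g.1) ∈ Ttx x₁ x₂ := add_mem hg (hgg _)
      have hfst : (g + gg (s - g.1)).1 = (gg s).1 := by
        show g.1 + (gg (s - g.1)).1 = (gg s).1
        rw [hgg1, hgg1]
        abel
      have := claimB _ hmem (gg s) (hgg s) hfst
      rw [hδdef]
      simp only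
      rw [← this]
      show g.2 +ᵥ ((gg (s - g.1)).2 +ᵥ p₀.2) = (g.2 + (gg (s - g.1)).2) +ᵥ p₀.2
      rw [add_vadd]
  · rintro ⟨⟨w, δ, hδ⟩, rfl⟩
    intro g hg s
    show smashMk X x₀ (w, g.2 +ᵥ δ (s - g.1)) = smashMk X x₀ (w, δ s)
    rw [hδ g hg s]
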